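/- Let k be a positive integer and let G be a graph of order n ≥ max(k, 3) that contains a Hamiltonian cycle. Then ν_k(G) = ⌊n/k⌋ and τ_k(G) ≥ ⌈n/k⌉. -/

import Mathlib

open SimpleGraph

/-- `S` is the vertex set of a (not necessarily induced) path of order `k` in `G`,
i.e. a `k`-path of `G`. -/
def IsPathSupport {V : Type*} (k : ℕ) (G : SimpleGraph V) (S : Set V) : Prop :=
  ∃ (u v : V) (p : G.Walk u v), p.IsPath ∧ p.support.length = k ∧ S = {x | x ∈ p.support}

/-- `X` is a `k`-vertex cover of `G`: every `k`-path of `G` contains a vertex of `X`. -/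
def IsKVertexCover {V : Type*} (k : ℕ) (G : SimpleGraph V) (X : Finset V) : Prop :=
  ∀ S : Set V, IsPathSupport k G S → ∃ x ∈ X, x ∈ S

/-- The `k`-matching number `ν_k(G)`: the maximum number of pairwise disjoint
`k`-paths of `G`. -/
noncomputable def nuK {V : Type*} (k : ℕ) (G : SimpleGraph V) : ℕ :=
  sSup {n | ∃ M : Finset (Set V), (∀ S ∈ M, IsPathSupport k G S) ∧
    (↑M : Set (Set V)).Pairwise Disjoint ∧ M.card = n}

/-- The `k`-vertex cover number `τ_k(G)`: the minimum cardinality of a `k`-vertex cover. -/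
noncomputable def tauK {V : Type*} (k : ℕ) (G : SimpleGraph V) : ℕ :=
  sInf {n | ∃ X : Finset V, IsKVertexCover k G X ∧ X.card = n}

/-- `G` belongs to the class `𝒢_k`: `ν_k(H) = τ_k(H)` for every induced subgraph `H` of `G`. -/
def memGclass {V : Type*} (k : ℕ) (G : SimpleGraph V) : Prop :=
  ∀ s : Set V, nuK k (G.induce s) = tauK k (G.induce s)

lemma exists_walk_support' {V : Type*} {G : SimpleGraph V} :
    ∀ (a : V) (l : List V), List.Chain G.Adj a l →
      ∃ (b : V) (p : G.Walk a b), p.support = a :: l := by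
  intro a l
  induction l generalizing a with
  | nil => exact fun _ => ⟨a, .nil, rfl⟩
  | cons c l ih =>
    intro h
    rw [List.Chain, List.isChain_cons_cons] at h
    obtain ⟨b, p, hp⟩ := ih c h.2
    exact ⟨b, .cons h.1 p, by simp [hp]⟩

lemma isPathSupport_list {V : Type*} {G : SimpleGraph V} {k : ℕ} (hk : 0 < k) (l : List V)
    (hlen : l.length = k) (hchain : l.Chain' G.Adj) (hnd : l.Nodup) :
    IsPathSupport k G {x | x ∈ l} := by
  match l, hlen with
  | [], hlen => simp at hlen; omega
  | a :: l', hlen =>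
    rw [List.Chain', List.isChain_cons] at hchain
    have hch : List.Chain G.Adj a l' := by
      cases l' with
      | nil => exact List.Chain.nil
      | cons c l'' =>
        exact List.Chain.cons (hchain.1 c rfl) (by simpa [List.Chain] using hchain.2)
    obtain ⟨b, p, hp⟩ := exists_walk_support' a l' hch
    exact ⟨a, b, p, by rw [Walk.isPath_def, hp]; exact hnd, by rw [hp]; exact hlen, by rw [hp]⟩

lemma walk_getVert_eq_support_get {V : Type*} {G : SimpleGraph V} {a b : V} (p : G.Walk a b) :
    ∀ (i : ℕ) (h : i < p.support.length), p.getVert i = p.support.get ⟨i, h⟩ := by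
  induction p with
  | nil => intro i h; simp at h; subst h; rfl
  | cons ha q ih =>
    intro i h
    cases i with
    | zero => rfl
    | succ i =>
      simp only [Walk.support_cons, Walk.getVert_cons_succ]
      rw [ih i (by simpa [Walk.support_cons] using h)]
      rfl

/-- If `G` has order `n ≥ max(k,3)` and contains a Hamiltonian cycle, then
`ν_k(G) = ⌊n/k⌋` and `τ_k(G) ≥ ⌈n/k⌉`. -/
theorem stmt8 {V : Type*} [Fintype V] [DecidableEq V] (k : ℕ) (hk : 0 < k) (G : SimpleGraph V)
    (hn : max k 3 ≤ Fintype.card V)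
    (u : V) (c : G.Walk u u) (hc : c.IsHamiltonianCycle) :
    nuK k G = Fintype.card V / k ∧
      (Fintype.card V + k - 1) / k ≤ tauK k G := by
  classical
  set n := Fintype.card V with hn_def
  have hkn : k ≤ n := le_trans (le_max_left _ _) hn
  have hn3 : 3 ≤ n := le_trans (le_max_right _ _) hn
  haveI : NeZero n := ⟨by omega⟩
  have hlen : c.length = n := hc.length_eq
  have hsl : c.support.length = n + 1 := by rw [Walk.length_support, hlen]
  have htl : c.support.tail.length = n := by simp [List.length_tail, hsl]
  set f : ZMod n → V := fun i => c.getVert (i.val + 1) with hf_def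
  have hget : ∀ (m : ℕ) (hm : m < n),
      c.getVert (m + 1) = c.support.tail.get ⟨m, by rw [htl]; exact hm⟩ := by
    intro m hm
    rw [walk_getVert_eq_support_get c (m+1) (by omega)]
    rw [List.get_tail]
  have hnd : c.support.tail.Nodup := hc.isCycle.support_nodup
  have hf_inj : Function.Injective f := by
    intro i j hij
    simp only [hf_def] at hij
    rw [hget i.val (ZMod.val_lt i), hget j.val (ZMod.val_lt j)] at hij
    have := List.nodup_iff_injective_get.1 hnd hij
    exact ZMod.val_injective n (by simpa using congrArg Fin.val this)
  have hone : (1 : ZMod n).val = 1 := ZMod.val_one'' (by omega)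
  have hadj : ∀ i : ZMod n, G.Adj (f i) (f (i + 1)) := by
    intro i
    have hi : i.val < n := ZMod.val_lt i
    have hv : (i + 1).val = (i.val + 1) % n := by rw [ZMod.val_add, hone]
    simp only [hf_def]
    rcases Nat.lt_or_ge (i.val + 1) n with h | h
    · rw [hv, Nat.mod_eq_of_lt h]
      exact c.adj_getVert_succ (by omega)
    · have heq : i.val + 1 = n := by omega
      have hmod : (i.val + 1) % n = 0 := by rw [heq, Nat.mod_self]
      have h1 : c.getVert (i.val + 1) = c.getVert 0 := by
        rw [heq, ← hlen, c.getVert_length, c.getVert_zero]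
      rw [hv, hmod, h1]
      exact c.adj_getVert_succ (by omega)
  have mkList : ∀ s : ℕ → ZMod n, (∀ m, m + 1 < k → s (m + 1) = s m + 1) →
      (∀ m1, m1 < k → ∀ m2, m2 < k → s m1 = s m2 → m1 = m2) →
      IsPathSupport k G {x | x ∈ (List.range k).map (fun d => f (s d))} := by
    intro s hs hsinj
    apply isPathSupport_list hk
    · simp
    · rw [List.Chain', List.isChain_map]
      obtain ⟨k', rfl⟩ : ∃ k', k = k' + 1 := ⟨k - 1, by omega⟩
      rw [List.isChain_range_succ]
      intro m hm
      rw [hs m (by omega)]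
      exact hadj (s m)
    · refine List.Nodup.map_on ?_ (List.nodup_range (n := k))
      intro x hx y hy hxy
      simp only [List.mem_range] at hx hy
      exact hsinj x hx y hy (hf_inj hxy)
  -- the chunks
  have hchunk_lt : ∀ i, i < n / k → ∀ d, d < k → i * k + d < n := by
    intro i hi d hd
    have h1 : (i + 1) * k ≤ (n / k) * k := Nat.mul_le_mul_right k (by omega)
    have h2 : (n / k) * k ≤ n := Nat.div_mul_le_self n k
    have h3 : (i + 1) * k = i * k + k := by ring
    omega
  set S : ℕ → Set V :=
    fun i => {x | x ∈ (List.range k).map (fun d => f (((i * k + d : ℕ)) : ZMod n))} with hS_def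
  have hmem : ∀ i x, x ∈ S i ↔ ∃ d, d < k ∧ f ((i * k + d : ℕ) : ZMod n) = x := by
    intro i x
    simp [hS_def]
  have hSpath : ∀ i, i < n / k → IsPathSupport k G (S i) := by
    intro i hi
    apply mkList
    · intro m hm
      push_cast
      ring
    · intro m1 h1 m2 h2 he
      have e1 := ZMod.val_natCast_of_lt (hchunk_lt i hi m1 h1)
      have e2 := ZMod.val_natCast_of_lt (hchunk_lt i hi m2 h2)
      have := congrArg ZMod.val he
      rw [e1, e2] at this
      omega
  have hdivq : ∀ i, ∀ d, d < k → (i * k + d) / k = i := by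
    intro i d hd
    have h1 : i * k + d = k * i + d := by ring
    rw [h1, Nat.mul_add_div hk, Nat.div_eq_of_lt hd]
    omega
  have hSdisj : ∀ i, i < n / k → ∀ j, j < n / k → i ≠ j → Disjoint (S i) (S j) := by
    intro i hi j hj hij
    rw [Set.disjoint_left]
    intro x hxi hxj
    obtain ⟨d, hd, hdx⟩ := (hmem i x).1 hxi
    obtain ⟨e, he, hex⟩ := (hmem j x).1 hxj
    have hcast := hf_inj (hdx.trans hex.symm)
    have hv := congrArg ZMod.val hcast
    rw [ZMod.val_natCast_of_lt (hchunk_lt i hi d hd),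
      ZMod.val_natCast_of_lt (hchunk_lt j hj e he)] at hv
    exact hij (by rw [← hdivq i d hd, hv, hdivq j e he])
  set M : Finset (Set V) := (Finset.range (n / k)).image S with hM_def
  have hMcard : M.card = n / k := by
    rw [hM_def, Finset.card_image_of_injOn, Finset.card_range]
    intro i hi j hj hij
    simp only [Finset.coe_range, Set.mem_Iio] at hi hj
    by_contra hne
    have hx : f ((i * k + 0 : ℕ) : ZMod n) ∈ S i := (hmem i _).2 ⟨0, hk, rfl⟩
    have hx2 : f ((i * k + 0 : ℕ) : ZMod n) ∈ S j := hij ▸ hx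
    exact Set.disjoint_left.1 (hSdisj i hi j hj hne) hx hx2
  have hnu_mem : n / k ∈ {m | ∃ M' : Finset (Set V), (∀ T ∈ M', IsPathSupport k G T) ∧
      (↑M' : Set (Set V)).Pairwise Disjoint ∧ M'.card = m} := by
    refine ⟨M, ?_, ?_, hMcard⟩
    · intro T hT
      obtain ⟨i, hi, rfl⟩ := Finset.mem_image.1 hT
      exact hSpath i (Finset.mem_range.1 hi)
    · intro T hT T' hT' hne
      obtain ⟨i, hi, rfl⟩ := Finset.mem_image.1 (Finset.mem_coe.1 hT)
      obtain ⟨j, hj, rfl⟩ := Finset.mem_image.1 (Finset.mem_coe.1 hT')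
      exact hSdisj i (Finset.mem_range.1 hi) j (Finset.mem_range.1 hj)
        (fun h => hne (by rw [h]))
  have hnu_ub : ∀ m ∈ {m | ∃ M' : Finset (Set V), (∀ T ∈ M', IsPathSupport k G T) ∧
      (↑M' : Set (Set V)).Pairwise Disjoint ∧ M'.card = m}, m ≤ n / k := by
    rintro m ⟨M', hpath, hdis, rfl⟩
    set B : Set V → Finset V := fun T => Finset.univ.filter (· ∈ T) with hB_def
    have hBcard : ∀ T ∈ M', (B T).card = k := by
      intro T hT
      obtain ⟨a, b, p, hp, hplen, rfl⟩ := hpath T hT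
      have hBe : B {x | x ∈ p.support} = p.support.toFinset := by
        ext x; simp [hB_def]
      rw [hBe, List.toFinset_card_of_nodup hp.support_nodup, hplen]
    have hBdis : ∀ T ∈ M', ∀ T' ∈ M', T ≠ T' → Disjoint (B T) (B T') := by
      intro T hT T' hT' hne
      have hd : Disjoint T T' := hdis (Finset.mem_coe.2 hT) (Finset.mem_coe.2 hT') hne
      rw [Finset.disjoint_left]
      intro x hx hx'
      simp only [hB_def, Finset.mem_filter, Finset.mem_univ, true_and] at hx hx'
      exact Set.disjoint_left.1 hd hx hx'
    have hsum : M'.card * k ≤ n := by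
      calc M'.card * k = ∑ _T ∈ M', k := by rw [Finset.sum_const, smul_eq_mul]
        _ = ∑ T ∈ M', (B T).card := (Finset.sum_congr rfl hBcard).symm
        _ = (M'.biUnion B).card := (Finset.card_biUnion hBdis).symm
        _ ≤ Fintype.card V := Finset.card_le_univ _
    exact (Nat.le_div_iff_mul_le hk).2 hsum
  have hnuk : nuK k G = n / k := by
    refine le_antisymm (csSup_le ⟨n / k, hnu_mem⟩ hnu_ub) (le_csSup ⟨n / k, hnu_ub⟩ hnu_mem)
  -- cover part
  have hcov : ∀ m ∈ {m | ∃ X : Finset V, IsKVertexCover k G X ∧ X.card = m},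
      (n + k - 1) / k ≤ m := by
    rintro m ⟨X, hX, rfl⟩
    have hwin : ∀ j : ZMod n, ∃ d, d < k ∧ f (j + (d : ℕ)) ∈ X := by
      intro j
      have hs1 : ∀ m, m + 1 < k → (fun d : ℕ => j + (d : ℕ)) (m + 1) =
          (fun d : ℕ => j + (d : ℕ)) m + 1 := by
        intro m hm
        push_cast
        ring
      have hs2 : ∀ m1, m1 < k → ∀ m2, m2 < k →
          (fun d : ℕ => j + (d : ℕ)) m1 = (fun d : ℕ => j + (d : ℕ)) m2 → m1 = m2 := by
        intro m1 h1 m2 h2 he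
        have : ((m1 : ℕ) : ZMod n) = ((m2 : ℕ) : ZMod n) := by
          exact add_left_cancel he
        have hv := congrArg ZMod.val this
        rw [ZMod.val_natCast_of_lt (lt_of_lt_of_le h1 hkn),
          ZMod.val_natCast_of_lt (lt_of_lt_of_le h2 hkn)] at hv
        exact hv
      obtain ⟨x, hxX, hxS⟩ := hX _ (mkList (fun d : ℕ => j + (d : ℕ)) hs1 hs2)
      simp only [Set.mem_setOf_eq, List.mem_map, List.mem_range] at hxS
      obtain ⟨d, hd, rfl⟩ := hxS
      exact ⟨d, hd, hxX⟩
    set T : Finset (ZMod n) := Finset.univ.filter (fun i => f i ∈ X) with hT_def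
    have hTX : T.card ≤ X.card := by
      refine Finset.card_le_card_of_injOn f ?_ (fun a _ b _ h => hf_inj h)
      intro i hi
      simp only [hT_def, Finset.mem_coe, Finset.mem_filter] at hi
      exact hi.2
    have hcover : (Finset.univ : Finset (ZMod n)) ⊆
        T.biUnion (fun i => (Finset.range k).image (fun d : ℕ => i - (d : ℕ))) := by
      intro j _
      obtain ⟨d, hd, hdX⟩ := hwin j
      refine Finset.mem_biUnion.2 ⟨j + (d : ℕ), ?_, ?_⟩
      · simp [hT_def, hdX]
      · exact Finset.mem_image.2 ⟨d, Finset.mem_range.2 hd, by ring⟩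
    have hcount : n ≤ T.card * k := by
      calc n = (Finset.univ : Finset (ZMod n)).card := by rw [Finset.card_univ, ZMod.card n]
        _ ≤ _ := Finset.card_le_card hcover
        _ ≤ ∑ i ∈ T, ((Finset.range k).image (fun d : ℕ => i - (d : ℕ))).card :=
            Finset.card_biUnion_le
        _ ≤ ∑ _i ∈ T, k := Finset.sum_le_sum
            (fun i _ => le_trans Finset.card_image_le (by simp))
        _ = T.card * k := by rw [Finset.sum_const, smul_eq_mul]
    have hXk : n ≤ X.card * k := le_trans hcount (Nat.mul_le_mul_right k hTX)
    rw [Nat.div_le_iff_le_mul_add_pred hk]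
    have hcomm : X.card * k = k * X.card := Nat.mul_comm _ _
    omega
  have htau_ne : {m | ∃ X : Finset V, IsKVertexCover k G X ∧ X.card = m}.Nonempty := by
    refine ⟨(Finset.univ : Finset V).card, Finset.univ, ?_, rfl⟩
    rintro T ⟨a, b, p, hp, hplen, rfl⟩
    exact ⟨a, Finset.mem_univ a, p.start_mem_support⟩
  exact ⟨hnuk, le_csInf htau_ne hcov⟩
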